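/- Let D be a finite set, and for each d ∈ D let o_d be an independent Bernoulli(q_d) random variable with q_d ∈ (0,1], and δ_d, δ̂_d ∈ ℝ, q̂_d ∈ (0,1]. Define L_DR = (1/|D|) Σ_d [δ̂_d + o_d(δ_d - δ̂_d)/q̂_d]. If δ̂_d = δ_d for all d (accurate imputation), then E[L_DR] = (1/|D|) Σ_d δ_d, regardless of the values q̂_d. -/
import Mathlib


open Finset

/-- Unbiasedness of the doubly robust estimator when the imputation is accurate:
if `δ̂ d = δ d` for all `d`, then `E[L_DR] = (1/|D|) Σ_d δ_d`, regardless of the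
estimated propensities `q̂`. -/
theorem stmt6 {D : Type*} [Fintype D] [DecidableEq D] [Nonempty D]
    (q qhat : D → ℝ) (hq : ∀ d, q d ∈ Set.Ioc (0 : ℝ) 1)
    (hqhat : ∀ d, qhat d ∈ Set.Ioc (0 : ℝ) 1)
    (δ δhat : D → ℝ) (heq : ∀ d, δhat d = δ d) :
    ∑ o : D → Bool, (∏ d, if o d then q d else 1 - q d) *
        ((Fintype.card D : ℝ)⁻¹ *
          ∑ d, (δhat d + (if o d then (1 : ℝ) else 0) * (δ d - δhat d) / qhat d))
      = (Fintype.card D : ℝ)⁻¹ * ∑ d, δ d := by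
  have h1 : ∀ o : D → Bool,
      ∑ d, (δhat d + (if o d then (1 : ℝ) else 0) * (δ d - δhat d) / qhat d)
        = ∑ d, δ d := by
    intro o; apply Finset.sum_congr rfl; intro d _; simp [heq d]
  have h2 : ∑ o : D → Bool, (∏ d, if o d then q d else 1 - q d) = 1 := by
    rw [← Fintype.prod_sum (fun d (b : Bool) => if b then q d else 1 - q d)]
    simp
  calc ∑ o : D → Bool, (∏ d, if o d then q d else 1 - q d) *
        ((Fintype.card D : ℝ)⁻¹ *
          ∑ d, (δhat d + (if o d then (1 : ℝ) else 0) * (δ d - δhat d) / qhat d))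
      = ∑ o : D → Bool, (∏ d, if o d then q d else 1 - q d) *
          ((Fintype.card D : ℝ)⁻¹ * ∑ d, δ d) := by
        apply Finset.sum_congr rfl; intro o _; rw [h1 o]
    _ = (∑ o : D → Bool, (∏ d, if o d then q d else 1 - q d)) *
          ((Fintype.card D : ℝ)⁻¹ * ∑ d, δ d) := by rw [Finset.sum_mul]
    _ = _ := by rw [h2, one_mul]
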